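/- Let λ be an integer partition with λ_j ≤ n - j for j ∈ [n], and for a permutation w ∈ S_n say w respects λ if w(j) ≤ n - λ_j for all j. Then the number of invertible n×n matrices over F_q respecting λ (meaning entries (i,j) with i > n - λ_j are zero) equals (q-1)^n q^{binom(n,2)} Σ_{w respects λ} q^{inv(w)}, where inv(w) = |Inv(w)| is the number of inversions of w. -/

import Mathlib

open Finset

attribute [local instance] Classical.propDecidable
open Finset
lemma aux_card {n a : ℕ} (ha : a ≤ n) :
    (univ.filter (fun v : Fin n => (v : ℕ) < a)).card = a := by
  have h : (univ.filter (fun v : Fin n => (v : ℕ) < a)).card = (range a).card := by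
    refine Finset.card_bij (fun v _ => (v : ℕ)) ?_ ?_ ?_
    · intro v hv; simp only [mem_filter] at hv; simpa using hv.2
    · intro v _ v' _ h; exact Fin.val_injective h
    · intro m hm; simp only [mem_range] at hm
      exact ⟨⟨m, lt_of_lt_of_le hm ha⟩, by simp [hm], rfl⟩
  rw [h, card_range]

lemma aux_card_perm {n : ℕ} (π : Equiv.Perm (Fin n)) {a : ℕ} (ha : a ≤ n) :
    (univ.filter (fun j : Fin n => ((π j : Fin n) : ℕ) < a)).card = a := by
  have h : (univ.filter (fun j : Fin n => ((π j : Fin n) : ℕ) < a)).card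
      = (univ.filter (fun v : Fin n => (v : ℕ) < a)).card := by
    refine Finset.card_bij (fun j _ => π j) ?_ ?_ ?_
    · intro j hj; simp only [mem_filter] at hj ⊢; exact ⟨mem_univ _, hj.2⟩
    · intro j _ j' _ h; exact π.injective h
    · intro v hv; simp only [mem_filter] at hv
      exact ⟨π.symm v, by simp [hv.2], by simp⟩
  rw [h, aux_card ha]

lemma coe_succAbove {n : ℕ} (a : Fin (n+1)) (x : Fin n) :
    ((a.succAbove x : Fin (n+1)) : ℕ) = if (x : ℕ) < (a : ℕ) then (x : ℕ) else (x : ℕ) + 1 := by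
  by_cases h : (x : ℕ) < (a : ℕ)
  · rw [Fin.succAbove_of_castSucc_lt _ _ (by simpa [Fin.lt_def] using h), if_pos h]; simp
  · rw [Fin.succAbove_of_le_castSucc _ _ (by simp only [Fin.le_def, Fin.coe_castSucc]; omega),
      if_neg h]; simp
open Finset

def invc {n : ℕ} (w : Equiv.Perm (Fin n)) : ℕ :=
  (Finset.univ.filter (fun p : Fin n × Fin n => p.1 < p.2 ∧ w p.2 < w p.1)).card

lemma invc_eq_sum {n : ℕ} (w : Equiv.Perm (Fin n)) :
    invc w = ∑ i : Fin n, ∑ j : Fin n, if i < j ∧ w j < w i then 1 else 0 := by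
  rw [invc, Finset.card_filter, ← Finset.univ_product_univ, Finset.sum_product]

def fwd {n : ℕ} (p : Fin (n+1) × Equiv.Perm (Fin n)) : Equiv.Perm (Fin (n+1)) :=
  (finSuccEquiv n).trans ((p.2.optionCongr).trans (finSuccEquiv' p.1).symm)

@[simp] lemma fwd_zero {n : ℕ} (a : Fin (n+1)) (π : Equiv.Perm (Fin n)) :
    fwd (a, π) 0 = a := by
  simp [fwd]

@[simp] lemma fwd_succ {n : ℕ} (a : Fin (n+1)) (π : Equiv.Perm (Fin n)) (j : Fin n) :
    fwd (a, π) (Fin.succ j) = a.succAbove (π j) := by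
  simp [fwd]

lemma fwd_bijective {n : ℕ} : Function.Bijective (fwd (n := n)) := by
  rw [Fintype.bijective_iff_injective_and_card]
  constructor
  · rintro ⟨a, π⟩ ⟨a', π'⟩ h
    have h0 : a = a' := by rw [← fwd_zero a π, ← fwd_zero a' π', h]
    subst h0
    have : π = π' := by
      ext j
      have := congrArg (fun w : Equiv.Perm (Fin (n+1)) => w (Fin.succ j)) h
      simp only [fwd_succ] at this
      have := Fin.succAbove_right_injective (p := a) this
      simpa using congrArg Fin.val this
    rw [this]
  · simp [Fintype.card_perm, Nat.factorial_succ]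

lemma succAbove_lt_self_iff {n : ℕ} (a : Fin (n+1)) (x : Fin n) :
    a.succAbove x < a ↔ (x : ℕ) < (a : ℕ) := by
  rw [Fin.lt_def, coe_succAbove]
  split <;> omega

lemma invc_fwd {n : ℕ} (a : Fin (n+1)) (π : Equiv.Perm (Fin n)) :
    invc (fwd (a, π)) = (a : ℕ) + invc π := by
  rw [invc_eq_sum, Fin.sum_univ_succ]
  congr 1
  · -- inversions with first index 0
    rw [Fin.sum_univ_succ]
    simp only [lt_irrefl, false_and, if_false, zero_add]
    have : ∀ j : Fin n, ((0 : Fin (n+1)) < Fin.succ j ∧ fwd (a, π) (Fin.succ j) < fwd (a, π) 0)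
        ↔ ((π j : ℕ) < (a : ℕ)) := by
      intro j
      simp only [fwd_zero, fwd_succ]
      rw [succAbove_lt_self_iff]
      simp [Fin.succ_pos]
    calc ∑ j : Fin n, (if (0 : Fin (n+1)) < Fin.succ j ∧ fwd (a, π) (Fin.succ j) < fwd (a, π) 0 then 1 else 0)
        = ∑ j : Fin n, (if ((π j : ℕ) < (a : ℕ)) then 1 else 0) := by
          exact Finset.sum_congr rfl fun j _ => by rw [if_congr (this j) rfl rfl]
      _ = (univ.filter (fun j : Fin n => ((π j : Fin n) : ℕ) < (a : ℕ))).card := by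
          rw [Finset.card_filter]
      _ = (a : ℕ) := aux_card_perm π (by omega)
  · -- inversions among successors
    rw [invc_eq_sum]
    apply Finset.sum_congr rfl
    intro i _
    rw [Fin.sum_univ_succ]
    have h0 : ¬ (Fin.succ i < (0 : Fin (n+1)) ∧ fwd (a, π) 0 < fwd (a, π) (Fin.succ i)) := by
      rintro ⟨h, -⟩
      rw [Fin.lt_def] at h
      simp only [Fin.val_zero, Fin.val_succ] at h
      omega
    rw [if_neg h0, zero_add]
    apply Finset.sum_congr rfl
    intro j _
    refine if_congr ?_ rfl rfl
    simp only [fwd_succ, Fin.succ_lt_succ_iff, Fin.succAbove_lt_succAbove_iff]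

lemma invc_zero (w : Equiv.Perm (Fin 0)) : invc w = 0 := by
  simp [invc]
lemma fwd_cond {n : ℕ} {b : Fin (n+1) → ℕ} (hb : Monotone b)
    (a : Fin (n+1)) (π : Equiv.Perm (Fin n)) :
    (∀ i : Fin (n+1), ((fwd (a, π)) i : ℕ) + 1 ≤ b i) ↔
      (((a : ℕ) + 1 ≤ b 0) ∧ ∀ j : Fin n, ((π j : ℕ) + 1 ≤ b (Fin.succ j) - 1)) := by
  have hm : ∀ j : Fin n, b 0 ≤ b (Fin.succ j) := fun j => hb (Fin.zero_le _)
  constructor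
  · intro h
    have h0 : (a : ℕ) + 1 ≤ b 0 := by simpa [fwd_zero] using h 0
    refine ⟨h0, fun j => ?_⟩
    have := h (Fin.succ j)
    rw [fwd_succ, coe_succAbove] at this
    have := hm j
    split at ‹_ + 1 ≤ _› <;> omega
  · rintro ⟨h0, h⟩ i
    induction i using Fin.cases with
    | zero => simpa [fwd_zero] using h0
    | succ j =>
      rw [fwd_succ, coe_succAbove]
      have := h j; have := hm j
      split <;> omega

lemma permSum (q : ℕ) : ∀ (n : ℕ) (b : Fin n → ℕ), Monotone b → (∀ j, b j ≤ n) →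
    (∑ w ∈ univ.filter (fun w : Equiv.Perm (Fin n) => ∀ j, (w j : ℕ) + 1 ≤ b j), q ^ invc w)
    = ∏ j : Fin n, ∑ i ∈ range (b j - (j : ℕ)), q ^ i
  | 0, b, _, _ => by
    rw [Finset.filter_true_of_mem (fun w _ => fun j => Fin.elim0 j)]
    simp [invc_zero]
  | (n+1), b, hb, hble => by
    have ih : (∑ w ∈ univ.filter
          (fun w : Equiv.Perm (Fin n) => ∀ j, (w j : ℕ) + 1 ≤ b (Fin.succ j) - 1), q ^ invc w)
        = ∏ j : Fin n, ∑ i ∈ range (b (Fin.succ j) - 1 - (j : ℕ)), q ^ i :=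
      permSum q n (fun j => b (Fin.succ j) - 1)
      (fun j k hjk => Nat.sub_le_sub_right (hb (Fin.succ_le_succ_iff.mpr hjk)) 1)
      (fun j => by show b (Fin.succ j) - 1 ≤ n; have := hble (Fin.succ j); omega)
    rw [Finset.sum_filter]
    rw [← Fintype.sum_bijective fwd fwd_bijective _
      (fun w => if (∀ j, (w j : ℕ) + 1 ≤ b j) then q ^ invc w else 0) (fun p => rfl)]
    rw [Fintype.sum_prod_type]
    calc (∑ a : Fin (n+1), ∑ π : Equiv.Perm (Fin n),
          if (∀ j, ((fwd (a, π)) j : ℕ) + 1 ≤ b j) then q ^ invc (fwd (a, π)) else 0)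
        = ∑ a : Fin (n+1), ∑ π : Equiv.Perm (Fin n),
            (if (a : ℕ) + 1 ≤ b 0 then q ^ (a : ℕ) else 0) *
            (if (∀ j : Fin n, (π j : ℕ) + 1 ≤ b (Fin.succ j) - 1) then q ^ invc π else 0) := by
          refine Finset.sum_congr rfl fun a _ => Finset.sum_congr rfl fun π _ => ?_
          rw [if_congr (fwd_cond hb a π) rfl rfl, invc_fwd, pow_add]
          by_cases h1 : (a : ℕ) + 1 ≤ b 0 <;>
            by_cases h2 : (∀ j : Fin n, (π j : ℕ) + 1 ≤ b (Fin.succ j) - 1) <;>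
            simp [h1, h2]
      _ = (∑ a : Fin (n+1), if (a : ℕ) + 1 ≤ b 0 then q ^ (a : ℕ) else 0) *
          (∑ π : Equiv.Perm (Fin n),
            if (∀ j : Fin n, (π j : ℕ) + 1 ≤ b (Fin.succ j) - 1) then q ^ invc π else 0) := by
          rw [Finset.sum_mul_sum]
      _ = (∑ i ∈ range (b 0), q ^ i) *
          ∏ j : Fin n, ∑ i ∈ range (b (Fin.succ j) - ((j : ℕ) + 1)), q ^ i := by
          congr 1
          · rw [Fin.sum_univ_eq_sum_range (fun i => if i + 1 ≤ b 0 then q ^ i else 0) (n+1)]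
            have h1 : ∀ i ∈ range (n+1), (if i + 1 ≤ b 0 then q ^ i else 0)
                = if i ∈ range (b 0) then q ^ i else 0 := by
              intro i _
              exact if_congr (by rw [mem_range]; omega) rfl rfl
            rw [Finset.sum_congr rfl h1, Finset.sum_ite_mem,
              Finset.inter_eq_right.mpr (Finset.range_subset_range.mpr (hble 0))]
          · rw [← Finset.sum_filter, ih]
            refine Finset.prod_congr rfl fun j _ => ?_
            congr 2
            omega
      _ = ∏ j : Fin (n+1), ∑ i ∈ range (b j - (j : ℕ)), q ^ i := by
          rw [Fin.prod_univ_succ]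
          simp [Fin.val_succ]
open Finset

attribute [local instance] Classical.propDecidable

lemma cardA {F : Type*} [Field F] [Fintype F] {V : Type*} [AddCommGroup V] [Module F V]
    [Fintype V] :
    ∀ (k : ℕ) (S : Fin k → Submodule F V), Monotone S →
    Nat.card {v : Fin k → V // LinearIndependent F v ∧ ∀ j, v j ∈ S j}
      = ∏ j : Fin k, (Nat.card (S j) - (Fintype.card F) ^ (j : ℕ))
  | 0, S, _ => by
    have huniq : ∀ v : Fin 0 → V, LinearIndependent F v ∧ ∀ j, v j ∈ S j :=
      fun v => ⟨linearIndependent_empty_type, fun j => j.elim0⟩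
    haveI : Unique {v : Fin 0 → V // LinearIndependent F v ∧ ∀ j, v j ∈ S j} :=
      ⟨⟨⟨fun i => i.elim0, huniq _⟩⟩, fun a => Subtype.ext (funext fun i => i.elim0)⟩
    rw [Nat.card_unique]
    simp
  | (k+1), S, hS => by
    have ih : Nat.card {f : Fin k → V // LinearIndependent F f ∧ ∀ j, f j ∈ S j.castSucc}
        = ∏ j : Fin k, (Nat.card (S j.castSucc) - (Fintype.card F) ^ (j : ℕ)) :=
      cardA k (fun j => S j.castSucc)
      (fun j j' h => hS (Fin.castSucc_le_castSucc_iff.mpr h))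
    -- the fiber equivalence
    set P : (Fin (k+1) → V) → Prop :=
      fun v => LinearIndependent F v ∧ ∀ j, v j ∈ S j with hP
    set Q : (Fin k → V) → Prop :=
      fun f => LinearIndependent F f ∧ ∀ j, f j ∈ S j.castSucc with hQ
    have key : ∀ f : Fin k → V,
        {v : {v : Fin (k+1) → V // P v} // Fin.init v.1 = f} ≃
        {x : V // (Q f ∧ x ∈ S (Fin.last k)) ∧ x ∉ Submodule.span F (Set.range f)} := by
      intro f
      refine ⟨fun v => ⟨v.1.1 (Fin.last k), ?_⟩, fun x => ⟨⟨Fin.snoc f x.1, ?_⟩, by simp⟩,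
        ?_, ?_⟩
      · obtain ⟨⟨v, hv1, hv2⟩, hvf⟩ := v
        simp only at hvf ⊢
        subst hvf
        rw [← Fin.snoc_init_self v, linearIndependent_fin_snoc] at hv1
        refine ⟨⟨⟨hv1.1, fun j => ?_⟩, hv2 (Fin.last k)⟩, hv1.2⟩
        · exact hv2 j.castSucc
      · obtain ⟨x, ⟨⟨hQf, hx1⟩, hx2⟩⟩ := x
        constructor
        · rw [linearIndependent_fin_snoc]
          exact ⟨hQf.1, hx2⟩
        · intro j
          induction j using Fin.lastCases with
          | last => simpa using hx1
          | cast j => simpa using hQf.2 j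
      · rintro ⟨⟨v, hv⟩, hvf⟩
        apply Subtype.ext
        apply Subtype.ext
        simp only
        rw [← hvf, Fin.snoc_init_self]
      · rintro ⟨x, hx⟩
        apply Subtype.ext
        simp [Fin.snoc_last]
    -- count by fibers
    rw [Nat.card_congr (Equiv.sigmaFiberEquiv
      (fun v : {v : Fin (k+1) → V // P v} => Fin.init v.1)).symm]
    rw [Nat.card_eq_fintype_card, Fintype.card_sigma]
    have hfib : ∀ f : Fin k → V,
        Fintype.card {v : {v : Fin (k+1) → V // P v} // Fin.init v.1 = f}
          = if Q f then Nat.card (S (Fin.last k)) - (Fintype.card F) ^ k else 0 := by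
      intro f
      rw [← Nat.card_eq_fintype_card, Nat.card_congr (key f)]
      by_cases hQf : Q f
      · rw [if_pos hQf]
        have hle : Submodule.span F (Set.range f) ≤ S (Fin.last k) := by
          rw [Submodule.span_le]
          rintro x ⟨j, rfl⟩
          exact hS (Fin.le_last j.castSucc) (hQf.2 j)
        have e1 : {x : V // (Q f ∧ x ∈ S (Fin.last k)) ∧ x ∉ Submodule.span F (Set.range f)}
            ≃ (((S (Fin.last k) : Set V) \ ((Submodule.span F (Set.range f) : Submodule F V) : Set V) : Set V)) :=
          Equiv.subtypeEquivRight (fun x => by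
            simp only [Set.mem_diff, SetLike.mem_coe]
            tauto)
        rw [Nat.card_congr e1, Nat.card_coe_set_eq,
          Set.ncard_diff (SetLike.coe_subset_coe.mpr hle)]
        have h1 : ((S (Fin.last k) : Submodule F V) : Set V).ncard = Nat.card (S (Fin.last k)) := by
          rw [← Nat.card_coe_set_eq]; rfl
        have h2 : ((Submodule.span F (Set.range f) : Submodule F V) : Set V).ncard
            = Fintype.card F ^ k := by
          rw [← Nat.card_coe_set_eq]
          have : Nat.card (Submodule.span F (Set.range f)) = Fintype.card F ^ k := by
            rw [Nat.card_eq_fintype_card, Module.card_eq_pow_finrank (K := F),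
              finrank_span_eq_card hQf.1, Fintype.card_fin]
          exact this
        rw [h1, h2]
      · rw [if_neg hQf]
        have : IsEmpty {x : V // (Q f ∧ x ∈ S (Fin.last k)) ∧
            x ∉ Submodule.span F (Set.range f)} := ⟨fun x => hQf x.2.1.1⟩
        exact Nat.card_of_isEmpty
    rw [Finset.sum_congr rfl fun f _ => hfib f, ← Finset.sum_filter,
      Finset.sum_const, smul_eq_mul]
    have hcard : (univ.filter Q).card
        = ∏ j : Fin k, (Nat.card (S j.castSucc) - Fintype.card F ^ (j : ℕ)) := by
      rw [← Fintype.card_subtype, ← Nat.card_eq_fintype_card]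
      exact ih
    rw [hcard, Fin.prod_univ_castSucc]
    simp [Fin.val_last]
def Smod (F : Type*) [Field F] (n m : ℕ) : Submodule F (Fin n → F) where
  carrier := {x | ∀ i : Fin n, m ≤ (i : ℕ) → x i = 0}
  add_mem' := fun ha hb i hi => by simp [ha i hi, hb i hi]
  zero_mem' := fun i _ => rfl
  smul_mem' := fun c x hx i hi => by simp [hx i hi]

lemma mem_Smod {F : Type*} [Field F] {n m : ℕ} {x : Fin n → F} :
    x ∈ Smod F n m ↔ ∀ i : Fin n, m ≤ (i : ℕ) → x i = 0 := Iff.rfl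

lemma Smod_mono {F : Type*} [Field F] {n m m' : ℕ} (h : m ≤ m') : Smod F n m ≤ Smod F n m' :=
  fun x hx i hi => hx i (h.trans hi)

lemma card_Smod {F : Type*} [Field F] [Fintype F] {n m : ℕ} (hm : m ≤ n) :
    Nat.card (Smod F n m) = Fintype.card F ^ m := by
  have e : Smod F n m ≃ ({i : Fin n // (i : ℕ) < m} → F) :=
    { toFun := fun x i => x.1 i.1
      invFun := fun g => ⟨fun i => if h : (i : ℕ) < m then g ⟨i, h⟩ else 0,
        fun i hi => dif_neg (by omega)⟩
      left_inv := fun x => Subtype.ext (funext fun i => by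
        by_cases h : (i : ℕ) < m
        · simp [h]
        · simp only [dif_neg h]
          exact (x.2 i (by omega)).symm)
      right_inv := fun g => funext fun i => by simp [i.2] }
  rw [Nat.card_congr e, Nat.card_eq_fintype_card, Fintype.card_fun,
    Fintype.card_subtype, aux_card hm]

lemma geom_nat (q : ℕ) : ∀ r : ℕ, (q - 1) * ∑ i ∈ range r, q ^ i = q ^ r - 1
  | 0 => by simp
  | (r+1) => by
    rcases Nat.eq_zero_or_pos q with rfl | hq
    · simp
    · rw [Finset.sum_range_succ, Nat.mul_add, geom_nat q r, Nat.sub_one_mul, pow_succ]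
      have h1 : 1 ≤ q ^ r := Nat.one_le_pow r q hq
      have h2 : q ^ r ≤ q ^ r * q := Nat.le_mul_of_pos_right _ hq
      have h3 : 1 ≤ q ^ r * q := h1.trans h2
      have h4 : q ^ r ≤ q * q ^ r := by rw [mul_comm]; exact h2
      have h5 : 1 ≤ q * q ^ r := by rw [mul_comm]; exact h3
      zify [h1, h2, h3, h4, h5]
      ring

/-- The number of invertible `n × n` matrices over `F_q` respecting a partition `λ`
(with `λ_j ≤ n - j`) equals `(q-1)^n q^{C(n,2)} Σ_{w respects λ} q^{inv(w)}`, where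
the sum is over permutations `w` with `w(j) ≤ n - λ_j` for all `j`. -/
theorem stmt11 (F : Type*) [Field F] [Fintype F] (q n : ℕ) (hq : q = Fintype.card F)
    (lam : Fin n → ℕ) (hmono : Antitone lam)
    (hbound : ∀ j : Fin n, lam j ≤ n - ((j : ℕ) + 1)) :
    Nat.card {A : Matrix (Fin n) (Fin n) F //
        IsUnit A ∧ ∀ i j : Fin n, n - lam j < (i : ℕ) + 1 → A i j = 0} =
      (q - 1) ^ n * q ^ n.choose 2 *
        ∑ w ∈ Finset.univ.filter
            (fun w : Equiv.Perm (Fin n) => ∀ j : Fin n, (w j : ℕ) + 1 ≤ n - lam j),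
          q ^ (Finset.univ.filter
            (fun p : Fin n × Fin n => p.1 < p.2 ∧ w p.2 < w p.1)).card := by
  subst hq
  -- Left side: transform matrices into tuples of columns
  have e : {A : Matrix (Fin n) (Fin n) F //
      IsUnit A ∧ ∀ i j : Fin n, n - lam j < (i : ℕ) + 1 → A i j = 0} ≃
      {v : Fin n → Fin n → F //
        LinearIndependent F v ∧ ∀ j, v j ∈ Smod F n (n - lam j)} :=
    { toFun := fun A => ⟨fun j i => A.1 i j,
        Matrix.linearIndependent_cols_iff_isUnit.mpr A.2.1,
        fun j i hi => A.2.2 i j (by omega)⟩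
      invFun := fun v => ⟨Matrix.of (fun i j => v.1 j i),
        Matrix.linearIndependent_cols_iff_isUnit.mp v.2.1,
        fun i j hij => v.2.2 j i (by omega)⟩
      left_inv := fun A => Subtype.ext rfl
      right_inv := fun v => Subtype.ext rfl }
  have hmonoS : Monotone (fun j : Fin n => Smod F n (n - lam j)) := fun j k hjk =>
    Smod_mono (Nat.sub_le_sub_left (hmono hjk) n)
  have hLHS : Nat.card {A : Matrix (Fin n) (Fin n) F //
      IsUnit A ∧ ∀ i j : Fin n, n - lam j < (i : ℕ) + 1 → A i j = 0}
      = ∏ j : Fin n, (Nat.card (Smod F n (n - lam j)) - Fintype.card F ^ (j : ℕ)) :=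
    (Nat.card_congr e).trans (cardA n (fun j => Smod F n (n - lam j)) hmonoS)
  rw [hLHS]
  -- Right side: the permutation sum
  have hb : Monotone (fun j : Fin n => n - lam j) := fun j k h =>
    Nat.sub_le_sub_left (hmono h) n
  have hble : ∀ j : Fin n, n - lam j ≤ n := fun j => Nat.sub_le n (lam j)
  have hperm : (∑ w ∈ Finset.univ.filter
        (fun w : Equiv.Perm (Fin n) => ∀ j : Fin n, (w j : ℕ) + 1 ≤ n - lam j),
        Fintype.card F ^ (Finset.univ.filter
            (fun p : Fin n × Fin n => p.1 < p.2 ∧ w p.2 < w p.1)).card)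
      = ∏ j : Fin n, ∑ i ∈ range (n - lam j - (j : ℕ)), Fintype.card F ^ i :=
    permSum (Fintype.card F) n (fun j => n - lam j) hb hble
  rw [hperm]
  -- arithmetic
  have hfac : ∀ j : Fin n, Nat.card (Smod F n (n - lam j)) - Fintype.card F ^ (j : ℕ)
      = (Fintype.card F - 1) * (Fintype.card F ^ (j : ℕ) * ∑ i ∈ range (n - lam j - (j : ℕ)), Fintype.card F ^ i) := by
    intro j
    clear e hLHS hperm hmonoS hb hble
    rw [card_Smod (Nat.sub_le n (lam j))]
    have hj1 : (j : ℕ) + 1 ≤ n - lam j := by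
      have := hbound j
      have := j.2
      omega
    rw [mul_left_comm, geom_nat, Nat.mul_sub, mul_one, ← pow_add]
    congr 2
    omega
  rw [Finset.prod_congr rfl fun j _ => hfac j, Finset.prod_mul_distrib,
    Finset.prod_const, Finset.prod_mul_distrib, Finset.prod_pow_eq_pow_sum]
  have hsum : (∑ j : Fin n, (j : ℕ)) = n.choose 2 := by
    rw [Fin.sum_univ_eq_sum_range (fun i => i) n, Finset.sum_range_id,
      Nat.choose_two_right]
  rw [hsum, Finset.card_univ, Fintype.card_fin, mul_assoc]
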